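/- If |F| > 2 and n ≥ 2, the triameter of the unitary Cayley graph C_{T_n(F)} equals 6. -/

import Mathlib

open Matrix

/-- The subring of upper triangular `n × n` matrices over `F`. -/
def upperTri (F : Type) [Field F] (n : ℕ) : Subring (Matrix (Fin n) (Fin n) F) where
  carrier := {M | M.BlockTriangular id}
  zero_mem' := Matrix.blockTriangular_zero
  one_mem' := Matrix.blockTriangular_one
  add_mem' := fun ha hb => ha.add hb
  mul_mem' := fun ha hb => ha.mul hb
  neg_mem' := fun ha => ha.neg

/-- The unitary Cayley graph of the ring `T_n(F)`. -/
def cayley (F : Type) [Field F] (n : ℕ) : SimpleGraph (upperTri F n) where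
  Adj x y := x ≠ y ∧ IsUnit (x - y)
  symm := by
    constructor
    intro x y ⟨hne, hu⟩
    exact ⟨hne.symm, by simpa using hu.neg⟩
  loopless := ⟨fun x h => h.1 rfl⟩

section aux

variable (F : Type) [Field F] (n : ℕ)

lemma coe_sub (x y : upperTri F n) :
    ((x - y : upperTri F n) : Matrix (Fin n) (Fin n) F) = (x : Matrix (Fin n) (Fin n) F) - y :=
  rfl

lemma isUnit_iff_diag (M : upperTri F n) :
    IsUnit M ↔ ∀ i, (M : Matrix (Fin n) (Fin n) F) i i ≠ 0 := by
  constructor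
  · intro h
    have h2 : IsUnit (M : Matrix (Fin n) (Fin n) F) := h.map (upperTri F n).subtype
    have hd : IsUnit (M : Matrix (Fin n) (Fin n) F).det :=
      (Matrix.isUnit_iff_isUnit_det _).1 h2
    rw [Matrix.det_of_upperTriangular M.2] at hd
    intro i
    exact Finset.prod_ne_zero_iff.mp hd.ne_zero i (Finset.mem_univ i)
  · intro h
    have hd : IsUnit (M : Matrix (Fin n) (Fin n) F).det := by
      rw [Matrix.det_of_upperTriangular M.2]
      exact (Finset.prod_ne_zero_iff.mpr fun i _ => h i).isUnit
    haveI : Invertible (M : Matrix (Fin n) (Fin n) F) := (M : Matrix (Fin n) (Fin n) F).invertibleOfIsUnitDet hd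
    have hinv : ((M : Matrix (Fin n) (Fin n) F)⁻¹) ∈ upperTri F n :=
      Matrix.blockTriangular_inv_of_blockTriangular M.2
    refine ⟨⟨M, ⟨_, hinv⟩, ?_, ?_⟩, rfl⟩
    · exact Subtype.ext (Matrix.mul_nonsing_inv _ hd)
    · exact Subtype.ext (Matrix.nonsing_inv_mul _ hd)

variable [Fintype F]

/-- any two vertices are reachable and at distance ≤ 2. -/
lemma dist_le_two (hn : 2 ≤ n) (hF : 2 < Fintype.card F) (x y : upperTri F n) :
    (cayley F n).Reachable x y ∧ (cayley F n).dist x y ≤ 2 := by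
  classical
  rcases eq_or_ne x y with rfl | hne
  · exact ⟨SimpleGraph.Reachable.refl x, by rw [SimpleGraph.dist_self]; omega⟩
  · -- choose a diagonal matrix avoiding both diagonals
    have hc : ∀ i : Fin n, ∃ c : F, c ≠ (x : Matrix (Fin n) (Fin n) F) i i ∧
        c ≠ (y : Matrix (Fin n) (Fin n) F) i i := by
      intro i
      by_contra hcon
      push_neg at hcon
      have hsub : (Finset.univ : Finset F) ⊆ {(x : Matrix (Fin n) (Fin n) F) i i,
          (y : Matrix (Fin n) (Fin n) F) i i} := by
        intro c _
        rcases eq_or_ne c ((x : Matrix (Fin n) (Fin n) F) i i) with h | h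
        · simp [h]
        · simp [hcon c h]
      have := Finset.card_le_card hsub
      have h2 : ({(x : Matrix (Fin n) (Fin n) F) i i,
          (y : Matrix (Fin n) (Fin n) F) i i} : Finset F).card ≤ 2 :=
        Finset.card_insert_le _ _ |>.trans (by simp)
      simp only [Finset.card_univ] at this
      omega
    choose c hcx hcy using hc
    have hz : Matrix.diagonal c ∈ upperTri F n := Matrix.blockTriangular_diagonal c
    set z : upperTri F n := ⟨Matrix.diagonal c, hz⟩ with hzdef
    have hnontriv : Nontrivial (upperTri F n) := by
      refine ⟨0, 1, fun h => ?_⟩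
      have := congrArg (fun M : upperTri F n => (M : Matrix (Fin n) (Fin n) F) ⟨0, by omega⟩ ⟨0, by omega⟩) h
      simp at this
    have hux : IsUnit (x - z) := by
      rw [isUnit_iff_diag]
      intro i
      rw [coe_sub]
      simpa [sub_ne_zero, Matrix.diagonal, hzdef] using (hcx i).symm
    have huy : IsUnit (z - y) := by
      rw [isUnit_iff_diag]
      intro i
      rw [coe_sub]
      simpa [sub_ne_zero, Matrix.diagonal, hzdef] using (hcy i)
    have hxz : x ≠ z := by
      rintro rfl
      rw [sub_self] at hux
      exact not_isUnit_zero hux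
    have hzy : z ≠ y := by
      rintro rfl
      rw [sub_self] at huy
      exact not_isUnit_zero huy
    have a1 : (cayley F n).Adj x z := by show x ≠ z ∧ IsUnit (x - z); exact ⟨hxz, hux⟩
    have a2 : (cayley F n).Adj z y := by show z ≠ y ∧ IsUnit (z - y); exact ⟨hzy, huy⟩
    refine ⟨⟨SimpleGraph.Walk.cons a1 (SimpleGraph.Walk.cons a2 SimpleGraph.Walk.nil)⟩,
      (SimpleGraph.dist_le (SimpleGraph.Walk.cons a1 (SimpleGraph.Walk.cons a2
        SimpleGraph.Walk.nil))).trans (by simp)⟩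

lemma dist_eq_two (hn : 2 ≤ n) (hF : 2 < Fintype.card F) (x y : upperTri F n)
    (hne : x ≠ y) (hnadj : ¬ (cayley F n).Adj x y) :
    (cayley F n).dist x y = 2 := by
  obtain ⟨hr, hle⟩ := dist_le_two F n hn hF x y
  have h0 : (cayley F n).dist x y ≠ 0 := fun h => hne (hr.dist_eq_zero_iff.mp h)
  have h1 : (cayley F n).dist x y ≠ 1 := fun h => hnadj (SimpleGraph.dist_eq_one_iff_adj.mp h)
  omega

end aux

/-- If `|F| > 2` and `n ≥ 2`, the triameter of `C_{T_n(F)}` equals `6`: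
`6` is the greatest value of `d(u,v) + d(u,w) + d(v,w)` over triples of vertices. -/
theorem stmt9 (F : Type) [Field F] [Fintype F] (n : ℕ) (hn : 2 ≤ n)
    (hF : 2 < Fintype.card F) :
    IsGreatest
      {d : ℕ | ∃ u v w : upperTri F n,
        d = (cayley F n).dist u v + (cayley F n).dist u w + (cayley F n).dist v w}
      6 := by
  constructor
  · -- 6 is attained
    set i0 : Fin n := ⟨0, by omega⟩
    set i1 : Fin n := ⟨1, by omega⟩
    have hv : Matrix.single i0 i0 (1 : F) ∈ upperTri F n :=
      Matrix.blockTriangular_single (le_refl _) 1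
    have hw : Matrix.single i0 i1 (1 : F) ∈ upperTri F n :=
      Matrix.blockTriangular_single (by simp [i0, i1]) 1
    refine ⟨0, ⟨_, hv⟩, ⟨_, hw⟩, ?_⟩
    have h01 : i0 ≠ i1 := by simp [i0, i1, Fin.ext_iff]
    have notu : ∀ (M : upperTri F n) (i : Fin n),
        (M : Matrix (Fin n) (Fin n) F) i i = 0 → ¬ IsUnit M := by
      intro M i hMi h
      exact ((isUnit_iff_diag F n M).mp h i) hMi
    have d1 : (cayley F n).dist 0 ⟨_, hv⟩ = 2 := by
      refine dist_eq_two F n hn hF _ _ ?_ ?_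
      · intro h
        have := congrArg (fun M : upperTri F n => (M : Matrix (Fin n) (Fin n) F) i0 i0) h
        simp [Matrix.single] at this
      · rintro ⟨-, hu⟩
        refine notu _ i1 ?_ hu
        rw [coe_sub]
        simp [Matrix.single, h01]
    have d2 : (cayley F n).dist 0 ⟨_, hw⟩ = 2 := by
      refine dist_eq_two F n hn hF _ _ ?_ ?_
      · intro h
        have := congrArg (fun M : upperTri F n => (M : Matrix (Fin n) (Fin n) F) i0 i1) h
        simp [Matrix.single] at this
      · rintro ⟨-, hu⟩
        refine notu _ i0 ?_ hu
        rw [coe_sub]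
        simp [Matrix.single, h01, h01.symm]
    have d3 : (cayley F n).dist ⟨_, hv⟩ ⟨_, hw⟩ = 2 := by
      refine dist_eq_two F n hn hF _ _ ?_ ?_
      · intro h
        have := congrArg (fun M : upperTri F n => (M : Matrix (Fin n) (Fin n) F) i0 i0) h
        simp [Matrix.single, h01, h01.symm] at this
      · rintro ⟨-, hu⟩
        refine notu _ i1 ?_ hu
        rw [coe_sub]
        simp [Matrix.single, h01, h01.symm]
    rw [d1, d2, d3]
  · rintro d ⟨u, v, w, rfl⟩
    have h1 := (dist_le_two F n hn hF u v).2
    have h2 := (dist_le_two F n hn hF u w).2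
    have h3 := (dist_le_two F n hn hF v w).2
    omega
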